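/- Let M > 0, r : ℝ → ℝ differentiable with r > 2M and r' = Ω² where Ω² = 1 - 2M/r. Let f : ℝ → ℝ be twice differentiable. Then the pure gauge quantities ω⁽¹⁾ := (1/2)·d/dv(Ω⁻²·d/dv(fΩ²)) and Ωtrχ⁽¹⁾ := 2·d/dv(fΩ²/r) satisfy the linearised Raychaudhuri-type relation d/dv(Ωtrχ⁽¹⁾) = -(2Ω²/r)·Ωtrχ⁽¹⁾ + (2M/r²)·Ωtrχ⁽¹⁾ + (4Ω²/r)·ω⁽¹⁾, provided all quantities are evaluated along v with the angular dependence suppressed (f depending only on v). -/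

import Mathlib

set_option maxHeartbeats 2000000 in

theorem pure_gauge_linearised_raychaudhuri
    (M : ℝ) (hM : 0 < M) (r f : ℝ → ℝ)
    (hr : Differentiable ℝ r) (hr2 : ∀ v, 2 * M < r v)
    (hr' : ∀ v, deriv r v = 1 - 2 * M / r v)
    (hf : ContDiff ℝ 2 f) :
    ∀ v,
      deriv (fun w => 2 * deriv (fun s => f s * (1 - 2 * M / r s) / r s) w) v
        = -(2 * (1 - 2 * M / r v) / r v)
              * (2 * deriv (fun s => f s * (1 - 2 * M / r s) / r s) v)
          + (2 * M / (r v) ^ 2)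
              * (2 * deriv (fun s => f s * (1 - 2 * M / r s) / r s) v)
          + (4 * (1 - 2 * M / r v) / r v)
              * ((1 / 2) * deriv (fun w =>
                  (1 - 2 * M / r w)⁻¹ * deriv (fun s => f s * (1 - 2 * M / r s)) w) v) := by
  intro v
  have hf1 : Differentiable ℝ f := hf.differentiable (by norm_num)
  have hf2 : Differentiable ℝ (deriv f) :=
    ((contDiff_succ_iff_deriv.mp (show ContDiff ℝ (1+1) f from hf)).2.2).differentiable one_ne_zero
  have hrne : ∀ w, r w ≠ 0 := fun w => by nlinarith [hr2 w]
  have hQpos : ∀ w, 0 < 1 - 2 * M / r w := by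
    intro w
    have h := hr2 w
    have hrpos : 0 < r w := by linarith
    rw [sub_pos, div_lt_one hrpos]
    exact h
  have hQne : ∀ w, (1 - 2 * M / r w) ≠ 0 := fun w => ne_of_gt (hQpos w)
  have hdr : ∀ w, HasDerivAt r (1 - 2 * M / r w) w := by
    intro w
    have h := (hr w).hasDerivAt
    rwa [hr' w] at h
  have hdf : ∀ w, HasDerivAt f (deriv f w) w := fun w => (hf1 w).hasDerivAt
  have hdf' : ∀ w, HasDerivAt (deriv f) (deriv (deriv f) w) w := fun w => (hf2 w).hasDerivAt
  have hQ : ∀ w, HasDerivAt (fun s => 1 - 2 * M / r s)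
      (2 * M * (1 - 2 * M / r w) / r w ^ 2) w := by
    intro w
    have h := ((hasDerivAt_const w (2 * M)).div (hdr w) (hrne w)).const_sub 1
    exact h.congr_deriv (by ring)
  -- derivative of f * Q
  have hB : ∀ w, HasDerivAt (fun s => f s * (1 - 2 * M / r s))
      (deriv f w * (1 - 2 * M / r w) + f w * (2 * M * (1 - 2 * M / r w) / r w ^ 2)) w :=
    fun w => (hdf w).mul (hQ w)
  -- derivative of f * Q / r
  have hg : ∀ w, HasDerivAt (fun s => f s * (1 - 2 * M / r s) / r s)
      (((deriv f w * (1 - 2 * M / r w) + f w * (2 * M * (1 - 2 * M / r w) / r w ^ 2)) * r w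
        - f w * (1 - 2 * M / r w) * (1 - 2 * M / r w)) / r w ^ 2) w :=
    fun w => (hB w).div (hdr w) (hrne w)
  -- rewrite the LHS function
  have e1 : (fun w => 2 * deriv (fun s => f s * (1 - 2 * M / r s) / r s) w)
      = (fun w => 2 * (((deriv f w * (1 - 2 * M / r w) + f w * (2 * M * (1 - 2 * M / r w) / r w ^ 2)) * r w
        - f w * (1 - 2 * M / r w) * (1 - 2 * M / r w)) / r w ^ 2)) :=
    funext fun w => by rw [(hg w).deriv]
  -- rewrite the omega inner function
  have e2 : (fun w => (1 - 2 * M / r w)⁻¹ * deriv (fun s => f s * (1 - 2 * M / r s)) w)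
      = (fun w => (1 - 2 * M / r w)⁻¹ *
          (deriv f w * (1 - 2 * M / r w) + f w * (2 * M * (1 - 2 * M / r w) / r w ^ 2))) :=
    funext fun w => by rw [(hB w).deriv]
  -- derivative of Q' = 2M Q / r^2
  have hQ' : HasDerivAt (fun w => 2 * M * (1 - 2 * M / r w) / r w ^ 2)
      ((2 * M * (2 * M * (1 - 2 * M / r v) / r v ^ 2) * r v ^ 2
        - 2 * M * (1 - 2 * M / r v) * (2 * r v ^ 1 * (1 - 2 * M / r v))) / (r v ^ 2) ^ 2) v :=
    ((hQ v).const_mul (2 * M)).div ((hdr v).pow 2) (pow_ne_zero 2 (hrne v))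
  -- derivative of B = f' Q + f Q'
  have hBnum : HasDerivAt (fun w => deriv f w * (1 - 2 * M / r w)
      + f w * (2 * M * (1 - 2 * M / r w) / r w ^ 2))
      ((deriv (deriv f) v * (1 - 2 * M / r v) + deriv f v * (2 * M * (1 - 2 * M / r v) / r v ^ 2))
        + (deriv f v * (2 * M * (1 - 2 * M / r v) / r v ^ 2)
          + f v * ((2 * M * (2 * M * (1 - 2 * M / r v) / r v ^ 2) * r v ^ 2
            - 2 * M * (1 - 2 * M / r v) * (2 * r v ^ 1 * (1 - 2 * M / r v))) / (r v ^ 2) ^ 2))) v :=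
    ((hdf' v).mul (hQ v)).add ((hdf v).mul hQ')
  -- derivative of the (rewritten) omega function at v
  have hOmega := ((hQ v).inv (hQne v)).mul hBnum
  -- derivative of the (rewritten) LHS function at v
  have hL := (((hBnum.mul (hdr v)).sub (((hdf v).mul (hQ v)).mul (hQ v))).div
      ((hdr v).pow 2) (pow_ne_zero 2 (hrne v))).const_mul 2
  rw [e1, e2]
  erw [hL.deriv, hOmega.deriv]
  rw [(hg v).deriv]
  simp only [Pi.mul_apply, Pi.sub_apply, Pi.div_apply, Pi.pow_apply, Pi.inv_apply, Nat.cast_ofNat]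
  have h1 : r v ≠ 0 := hrne v
  have h2 : (1 - 2 * M / r v) ≠ 0 := hQne v
  have h3 : r v - 2 * M ≠ 0 := by have := hr2 v; intro h; linarith
  field_simp
  ring
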